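/- In the data setting, rank [[A − λI],[C]] = n holds for every A ∈ 𝒜_dat and every λ ∈ ℂ (i.e., by the Hautus test, the data are informative for observability of the pair (C,A)) if and only if ker C ⊆ im X₋ and rank [[R − λMX₋],[CX₋]] = rank X₋ for all λ ∈ ℂ. Similarly, rank [[A − λI],[C]] = n holds for every A ∈ 𝒜_dat and every λ ∈ ℂ with |λ| ≥ 1 (informativity for detectability) if and only if ker C ⊆ im X₋ and rank [[R − λMX₋],[CX₋]] = rank X₋ for all λ ∈ ℂ with |λ| ≥ 1. -/

import Mathlib

open Matrix

/-- Complexification of a real matrix. -/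
noncomputable def cx {a b : ℕ} (M : Matrix (Fin a) (Fin b) ℝ) : Matrix (Fin a) (Fin b) ℂ :=
  M.map (algebraMap ℝ ℂ)

/-- First T columns of the state data matrix X. -/
def Xminus {n T : ℕ} (X : Matrix (Fin n) (Fin (T + 1)) ℝ) : Matrix (Fin n) (Fin T) ℝ :=
  Matrix.of fun i t => X i t.castSucc

/-- Last T columns of the state data matrix X. -/
def Xplus {n T : ℕ} (X : Matrix (Fin n) (Fin (T + 1)) ℝ) : Matrix (Fin n) (Fin T) ℝ :=
  Matrix.of fun i t => X i t.succ

/-- The set of state matrices A consistent with the noisy data (U₋, X, Y₋). -/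
def Adat {n m p q T : ℕ} (B : Matrix (Fin n) (Fin m) ℝ) (C : Matrix (Fin p) (Fin n) ℝ)
    (D : Matrix (Fin p) (Fin m) ℝ) (E : Matrix (Fin n) (Fin q) ℝ)
    (F : Matrix (Fin p) (Fin q) ℝ) (U : Matrix (Fin m) (Fin T) ℝ)
    (X : Matrix (Fin n) (Fin (T + 1)) ℝ) (Y : Matrix (Fin p) (Fin T) ℝ) :
    Set (Matrix (Fin n) (Fin n) ℝ) :=
  {A | ∃ W : Matrix (Fin q) (Fin T) ℝ,
    Xplus X = A * Xminus X + B * U + E * W ∧ Y = C * Xminus X + D * U + F * W}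

/-! ### Auxiliary material -/

namespace InfObs

/-- Complexification of a real vector. -/
noncomputable def vcx {a : ℕ} (v : Fin a → ℝ) : Fin a → ℂ := fun i => (v i : ℂ)

def vre {a : ℕ} (x : Fin a → ℂ) : Fin a → ℝ := fun i => (x i).re
def vim {a : ℕ} (x : Fin a → ℂ) : Fin a → ℝ := fun i => (x i).im

lemma vcx_eq_zero {a : ℕ} {v : Fin a → ℝ} : vcx v = 0 ↔ v = 0 := by
  constructor <;> intro h <;> ext i <;> have := congrFun h i <;>
    simpa [vcx] using this

lemma vcx_smul {a : ℕ} (r : ℝ) (v : Fin a → ℝ) : vcx (r • v) = (r : ℂ) • vcx v := by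
  ext i; simp [vcx, Complex.real_smul]

lemma cx_mulVec_vcx {a b : ℕ} (A : Matrix (Fin a) (Fin b) ℝ) (v : Fin b → ℝ) :
    cx A *ᵥ vcx v = vcx (A *ᵥ v) := by
  ext i
  simp [cx, vcx, mulVec, dotProduct]

lemma cx_mul {a b c : ℕ} (A : Matrix (Fin a) (Fin b) ℝ) (B : Matrix (Fin b) (Fin c) ℝ) :
    cx (A * B) = cx A * cx B := Matrix.map_mul

lemma cx_add {a b : ℕ} (A B : Matrix (Fin a) (Fin b) ℝ) : cx (A + B) = cx A + cx B :=
  Matrix.map_add _ (by simp) _ _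

lemma decomp {a : ℕ} (x : Fin a → ℂ) : x = vcx (vre x) + Complex.I • vcx (vim x) := by
  ext i
  simp [vcx, vre, vim, Complex.ext_iff]

lemma pair_eq_zero {a : ℕ} {u v : Fin a → ℝ} :
    vcx u + Complex.I • vcx v = 0 ↔ u = 0 ∧ v = 0 := by
  constructor
  · intro h
    have h' : ∀ i, u i = 0 ∧ v i = 0 := fun i => by
      simpa [vcx, Complex.ext_iff] using congrFun h i
    exact ⟨funext fun i => (h' i).1, funext fun i => (h' i).2⟩
  · rintro ⟨rfl, rfl⟩
    ext i; simp [vcx]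

lemma pair_ext {a : ℕ} {u v u' v' : Fin a → ℝ}
    (h : vcx u + Complex.I • vcx v = vcx u' + Complex.I • vcx v') : u = u' ∧ v = v' := by
  have h' : ∀ i, u i = u' i ∧ v i = v' i := fun i => by
    simpa [vcx, Complex.ext_iff] using congrFun h i
  exact ⟨funext fun i => (h' i).1, funext fun i => (h' i).2⟩

lemma cx_mulVec_decomp {a b : ℕ} (A : Matrix (Fin a) (Fin b) ℝ) (x : Fin b → ℂ) :
    cx A *ᵥ x = vcx (A *ᵥ vre x) + Complex.I • vcx (A *ᵥ vim x) := by
  ext i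
  simp [cx, vcx, vre, vim, mulVec, dotProduct, Complex.ext_iff, Complex.mul_re,
    Complex.mul_im, Finset.sum_add_distrib]

lemma smul_pair {a : ℕ} (lam : ℂ) (u v : Fin a → ℝ) :
    lam • (vcx u + Complex.I • vcx v)
      = vcx (lam.re • u - lam.im • v) + Complex.I • vcx (lam.im • u + lam.re • v) := by
  ext i
  simp [vcx, Complex.ext_iff, Complex.mul_re, Complex.mul_im]
  ring

lemma pair_sub {a : ℕ} (u v u' v' : Fin a → ℝ) :
    (vcx u + Complex.I • vcx v) - (vcx u' + Complex.I • vcx v')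
      = vcx (u - u') + Complex.I • vcx (v - v') := by
  ext i
  simp [vcx, Complex.ext_iff]

/-! ### Rank lemmas -/

lemma rank_eq_width_iff {m' : Type*} [Fintype m'] {b : ℕ} (P : Matrix m' (Fin b) ℂ) :
    P.rank = b ↔ ∀ x : Fin b → ℂ, P *ᵥ x = 0 → x = 0 := by
  have hrn := LinearMap.finrank_range_add_finrank_ker P.mulVecLin
  have hb : Module.finrank ℂ (Fin b → ℂ) = b := by simp
  rw [hb] at hrn
  constructor
  · intro h x hx
    have hker : Module.finrank ℂ (LinearMap.ker P.mulVecLin) = 0 := by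
      have : P.rank = Module.finrank ℂ (LinearMap.range P.mulVecLin) := rfl
      omega
    have : LinearMap.ker P.mulVecLin = ⊥ := Submodule.finrank_eq_zero.mp hker
    have hx' : x ∈ LinearMap.ker P.mulVecLin := by
      simpa [LinearMap.mem_ker, mulVecLin_apply] using hx
    rw [this] at hx'
    simpa using hx'
  · intro h
    have : LinearMap.ker P.mulVecLin = ⊥ := by
      rw [LinearMap.ker_eq_bot']
      intro x hx
      exact h x (by simpa [mulVecLin_apply] using hx)
    have hker : Module.finrank ℂ (LinearMap.ker P.mulVecLin) = 0 := by
      rw [this]; simp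
    have : P.rank = Module.finrank ℂ (LinearMap.range P.mulVecLin) := rfl
    omega

lemma rank_mul_eq_iff {m' : Type*} [Fintype m'] {b c : ℕ}
    (G : Matrix m' (Fin b) ℂ) (X : Matrix (Fin b) (Fin c) ℂ) :
    (G * X).rank = X.rank ↔ ∀ ξ : Fin c → ℂ, G *ᵥ (X *ᵥ ξ) = 0 → X *ᵥ ξ = 0 := by
  have hle : LinearMap.ker X.mulVecLin ≤ LinearMap.ker (G * X).mulVecLin := by
    intro ξ hξ
    simp only [LinearMap.mem_ker, mulVecLin_apply] at *
    rw [← mulVec_mulVec, hξ, mulVec_zero]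
  have h1 := LinearMap.finrank_range_add_finrank_ker X.mulVecLin
  have h2 := LinearMap.finrank_range_add_finrank_ker (G * X).mulVecLin
  have hc : Module.finrank ℂ (Fin c → ℂ) = c := by simp
  rw [hc] at h1 h2
  have e1 : X.rank = Module.finrank ℂ (LinearMap.range X.mulVecLin) := rfl
  have e2 : (G * X).rank = Module.finrank ℂ (LinearMap.range (G * X).mulVecLin) := rfl
  constructor
  · intro h ξ hξ
    have hk : Module.finrank ℂ (LinearMap.ker X.mulVecLin)
        = Module.finrank ℂ (LinearMap.ker (G * X).mulVecLin) := by omega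
    have : LinearMap.ker X.mulVecLin = LinearMap.ker (G * X).mulVecLin :=
      Submodule.eq_of_le_of_finrank_eq hle hk
    have hmem : ξ ∈ LinearMap.ker (G * X).mulVecLin := by
      simp only [LinearMap.mem_ker, mulVecLin_apply]
      rw [← mulVec_mulVec]; exact hξ
    rw [← this] at hmem
    simpa [LinearMap.mem_ker, mulVecLin_apply] using hmem
  · intro h
    have : LinearMap.ker X.mulVecLin = LinearMap.ker (G * X).mulVecLin := by
      refine le_antisymm hle fun ξ hξ => ?_
      simp only [LinearMap.mem_ker, mulVecLin_apply] at *
      exact h ξ (by rw [mulVec_mulVec]; exact hξ)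
    have hk : Module.finrank ℂ (LinearMap.ker X.mulVecLin)
        = Module.finrank ℂ (LinearMap.ker (G * X).mulVecLin) := by rw [this]
    omega

noncomputable def vcxL (b : ℕ) : (Fin b → ℝ) →ₗ[ℝ] (Fin b → ℂ) where
  toFun v := vcx v
  map_add' u v := by ext i; simp [vcx]
  map_smul' r v := by ext i; simp [vcx, Complex.real_smul]

lemma cx_rank {a b : ℕ} (A : Matrix (Fin a) (Fin b) ℝ) : (cx A).rank = A.rank := by
  set L := LinearMap.ker A.mulVecLin with hL
  set K := LinearMap.ker (cx A).mulVecLin with hK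
  have hmem : ∀ z : L × L, vcx (z.1 : Fin b → ℝ) + Complex.I • vcx (z.2 : Fin b → ℝ)
      ∈ K.restrictScalars ℝ := by
    rintro ⟨⟨u, hu⟩, ⟨v, hv⟩⟩
    simp only [Submodule.restrictScalars_mem, hK, LinearMap.mem_ker, mulVecLin_apply]
    rw [cx_mulVec_decomp]
    have hre : vre (vcx u + Complex.I • vcx v) = u := by ext i; simp [vre, vcx]
    have him : vim (vcx u + Complex.I • vcx v) = v := by ext i; simp [vim, vcx]
    rw [hre, him]
    rw [hL] at hu hv
    simp only [LinearMap.mem_ker, mulVecLin_apply] at hu hv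
    rw [hu, hv]
    simp [pair_eq_zero]
  let ψ0 : (L × L) →ₗ[ℝ] (Fin b → ℂ) :=
    ((vcxL b).comp L.subtype).coprod (Complex.I • ((vcxL b).comp L.subtype))
  have hψ0 : ∀ z : L × L, ψ0 z = vcx (z.1 : Fin b → ℝ) + Complex.I • vcx (z.2 : Fin b → ℝ) := by
    rintro ⟨⟨u, hu⟩, ⟨v, hv⟩⟩
    simp [ψ0, vcxL]
  let ψ : (L × L) →ₗ[ℝ] (K.restrictScalars ℝ) :=
    ψ0.codRestrict (K.restrictScalars ℝ) (fun z => by rw [hψ0]; exact hmem z)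
  have hbij : Function.Bijective ψ := by
    constructor
    · intro z w hzw
      have : ψ0 z = ψ0 w := congrArg Subtype.val hzw
      rw [hψ0, hψ0] at this
      obtain ⟨e1, e2⟩ := pair_ext this
      exact Prod.ext (Subtype.ext e1) (Subtype.ext e2)
    · rintro ⟨x, hx⟩
      simp only [Submodule.restrictScalars_mem, hK, LinearMap.mem_ker, mulVecLin_apply] at hx
      rw [cx_mulVec_decomp] at hx
      have hu : A *ᵥ vre x = 0 := (pair_eq_zero.mp hx).1
      have hv : A *ᵥ vim x = 0 := (pair_eq_zero.mp hx).2
      refine ⟨⟨⟨vre x, ?_⟩, ⟨vim x, ?_⟩⟩, ?_⟩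
      · simp [hL, LinearMap.mem_ker, mulVecLin_apply, hu]
      · simp [hL, LinearMap.mem_ker, mulVecLin_apply, hv]
      · apply Subtype.ext
        show ψ0 _ = x
        rw [hψ0]
        exact (decomp x).symm
  have heq : Module.finrank ℝ (L × L) = Module.finrank ℝ (K.restrictScalars ℝ) :=
    (LinearEquiv.ofBijective ψ hbij).finrank_eq
  have hLL : Module.finrank ℝ (L × L) = 2 * Module.finrank ℝ L := by
    rw [Module.finrank_prod]; ring
  have hKr : Module.finrank ℝ (K.restrictScalars ℝ) = 2 * Module.finrank ℂ K := by
    rw [← Complex.finrank_real_complex]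
    exact (Module.finrank_mul_finrank ℝ ℂ K).symm
  have hdim : Module.finrank ℂ K = Module.finrank ℝ L := by omega
  have h1 := LinearMap.finrank_range_add_finrank_ker A.mulVecLin
  have h2 := LinearMap.finrank_range_add_finrank_ker (cx A).mulVecLin
  have hb1 : Module.finrank ℝ (Fin b → ℝ) = b := by simp
  have hb2 : Module.finrank ℂ (Fin b → ℂ) = b := by simp
  rw [hb1, ← hL] at h1; rw [hb2, ← hK] at h2
  have e1 : A.rank = Module.finrank ℝ (LinearMap.range A.mulVecLin) := rfl
  have e2 : (cx A).rank = Module.finrank ℂ (LinearMap.range (cx A).mulVecLin) := rfl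
  omega

/-! ### Dual functionals and rank-one perturbations -/

lemma exists_dual {n : ℕ} (K : Submodule ℝ (Fin n → ℝ)) (x : Fin n → ℝ) (hx : x ∉ K) :
    ∃ f : Fin n → ℝ, f ⬝ᵥ x = 1 ∧ ∀ y ∈ K, f ⬝ᵥ y = 0 := by
  obtain ⟨φ, hφx, hφK⟩ := K.exists_dual_map_eq_bot_of_notMem hx inferInstance
  set g : Module.Dual ℝ (Fin n → ℝ) := (φ x)⁻¹ • φ with hg
  have hgy : ∀ y : Fin n → ℝ, (fun j => g (Pi.single j 1)) ⬝ᵥ y = g y := by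
    intro y
    rw [g.pi_apply_eq_sum_univ y]
    simp only [dotProduct, smul_eq_mul]
    refine Finset.sum_congr rfl fun j _ => ?_
    rw [mul_comm]
    congr 1
    congr 1
    ext t
    simp [Pi.single_apply, eq_comm]
  refine ⟨fun j => g (Pi.single j 1), ?_, ?_⟩
  · rw [hgy x]
    simp [hg, inv_mul_cancel₀ hφx]
  · intro y hy
    rw [hgy y]
    have : φ y = 0 := by
      have : φ y ∈ K.map φ := Submodule.mem_map_of_mem hy
      rw [hφK] at this
      simpa using this
    simp [hg, this]

lemma vecMulVec_mulVec' {a b : ℕ} (c : Fin a → ℝ) (f w : Fin b → ℝ) :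
    vecMulVec c f *ᵥ w = (f ⬝ᵥ w) • c := by
  ext i
  simp only [vecMulVec, mulVec, dotProduct, of_apply, Pi.smul_apply, smul_eq_mul,
    Finset.mul_sum]
  rw [Finset.sum_mul]
  exact Finset.sum_congr rfl fun j _ => by ring

lemma vecMulVec_mul' {a b c : ℕ} (u : Fin a → ℝ) (f : Fin b → ℝ) (X : Matrix (Fin b) (Fin c) ℝ) :
    vecMulVec u f * X = vecMulVec u (f ᵥ* X) := by
  ext i j
  simp [vecMulVec, mul_apply, vecMul, dotProduct, Finset.mul_sum, mul_assoc]

lemma mul_vecMulVec' {a b c : ℕ} (E : Matrix (Fin a) (Fin b) ℝ) (η : Fin b → ℝ) (g : Fin c → ℝ) :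
    E * vecMulVec η g = vecMulVec (E *ᵥ η) g := by
  ext i j
  simp [vecMulVec, mul_apply, mulVec, dotProduct, Finset.sum_mul, mul_assoc]

lemma vecMulVec_zero_left {a c : ℕ} (g : Fin c → ℝ) :
    vecMulVec (0 : Fin a → ℝ) g = 0 := by
  ext i j; simp [vecMulVec]

lemma vecMulVec_zero_right {a c : ℕ} (u : Fin a → ℝ) :
    vecMulVec u (0 : Fin c → ℝ) = 0 := by
  ext i j; simp [vecMulVec]

lemma vecMulVec_neg_left {a c : ℕ} (u : Fin a → ℝ) (g : Fin c → ℝ) :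
    vecMulVec (-u) g = -vecMulVec u g := by
  ext i j; simp [vecMulVec]

/-! ### Data-consistency lemmas -/

variable {n m p q T k : ℕ}
  {B : Matrix (Fin n) (Fin m) ℝ} {C : Matrix (Fin p) (Fin n) ℝ}
  {D : Matrix (Fin p) (Fin m) ℝ} {E : Matrix (Fin n) (Fin q) ℝ}
  {F : Matrix (Fin p) (Fin q) ℝ}
  {U : Matrix (Fin m) (Fin T) ℝ} {X : Matrix (Fin n) (Fin (T + 1)) ℝ}
  {Y : Matrix (Fin p) (Fin T) ℝ}
  {M : Matrix (Fin k) (Fin n) ℝ} {N : Matrix (Fin k) (Fin p) ℝ}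

lemma mem_Adat_of {A₀ : Matrix (Fin n) (Fin n) ℝ} (hA₀ : A₀ ∈ Adat B C D E F U X Y)
    (Δ : Matrix (Fin n) (Fin n) ℝ) (ΔW : Matrix (Fin q) (Fin T) ℝ)
    (h1 : Δ * Xminus X + E * ΔW = 0) (h2 : F * ΔW = 0) :
    A₀ + Δ ∈ Adat B C D E F U X Y := by
  obtain ⟨W₀, hX, hY⟩ := hA₀
  refine ⟨W₀ + ΔW, ?_, ?_⟩
  · rw [hX, Matrix.add_mul, Matrix.mul_add]
    have : (A₀ * Xminus X + Δ * Xminus X) + B * U + (E * W₀ + E * ΔW)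
        = (A₀ * Xminus X + B * U + E * W₀) + (Δ * Xminus X + E * ΔW) := by abel
    rw [this, h1, add_zero]
  · rw [hY, Matrix.mul_add, h2, add_zero]

lemma ME_NF_eq_zero
    (hMN : LinearMap.ker (fromCols M N).mulVecLin
      = LinearMap.range (fromRows E F).mulVecLin) :
    M * E + N * F = 0 := by
  have key : ∀ w : Fin q → ℝ, M *ᵥ (E *ᵥ w) + N *ᵥ (F *ᵥ w) = 0 := by
    intro w
    have hmem : Sum.elim (E *ᵥ w) (F *ᵥ w) ∈ LinearMap.ker (fromCols M N).mulVecLin := by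
      rw [hMN]
      exact ⟨w, by simp [mulVecLin_apply]⟩
    simpa [LinearMap.mem_ker, mulVecLin_apply] using hmem
  ext i j
  have := congrFun (key (Pi.single j 1)) i
  simp only [Pi.add_apply, Pi.zero_apply] at this
  simp only [Matrix.add_apply, Matrix.zero_apply, Matrix.mul_apply]
  rw [← this]
  simp [mulVec, dotProduct, Pi.single_apply, Finset.mul_sum, mul_comm]

lemma exists_EF_preimage
    (hMN : LinearMap.ker (fromCols M N).mulVecLin
      = LinearMap.range (fromRows E F).mulVecLin)
    (z : Fin n → ℝ) (hz : M *ᵥ z = 0) :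
    ∃ η : Fin q → ℝ, E *ᵥ η = z ∧ F *ᵥ η = 0 := by
  have hmem : Sum.elim z (0 : Fin p → ℝ) ∈ LinearMap.ker (fromCols M N).mulVecLin := by
    simp [LinearMap.mem_ker, mulVecLin_apply, hz]
  rw [hMN] at hmem
  obtain ⟨η, hη⟩ := hmem
  simp only [mulVecLin_apply, fromRows_mulVec] at hη
  refine ⟨η, ?_, ?_⟩
  · have := congrFun hη
    ext i; simpa using this (Sum.inl i)
  · have := congrFun hη
    ext i; simpa using this (Sum.inr i)

lemma R_eq (hMN : LinearMap.ker (fromCols M N).mulVecLin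
      = LinearMap.range (fromRows E F).mulVecLin)
    {R : Matrix (Fin k) (Fin T) ℝ}
    (hR : R = M * (Xplus X - B * U) + N * (Y - C * Xminus X - D * U))
    {A : Matrix (Fin n) (Fin n) ℝ} (hA : A ∈ Adat B C D E F U X Y) :
    R = M * A * Xminus X := by
  obtain ⟨W, hX, hY⟩ := hA
  have h0 := ME_NF_eq_zero (E := E) (F := F) hMN
  rw [hR, hX, hY]
  have e1 : A * Xminus X + B * U + E * W - B * U = A * Xminus X + E * W := by abel
  have e2 : C * Xminus X + D * U + F * W - C * Xminus X - D * U = F * W := by abel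
  rw [e1, e2, Matrix.mul_add, Matrix.mul_assoc]
  have : M * (E * W) + N * (F * W) = 0 := by
    rw [← Matrix.mul_assoc, ← Matrix.mul_assoc, ← Matrix.add_mul, h0, Matrix.zero_mul]
  rw [add_assoc, this, add_zero]

/-- Rank-one perturbation of a consistent matrix stays consistent, provided the direction
vector lies in `E · ker F`. -/
lemma mem_Adat_perturb {A₀ : Matrix (Fin n) (Fin n) ℝ} (hA₀ : A₀ ∈ Adat B C D E F U X Y)
    (c f : Fin n → ℝ) (h : ∃ η : Fin q → ℝ, E *ᵥ η = c ∧ F *ᵥ η = 0) :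
    A₀ + vecMulVec c f ∈ Adat B C D E F U X Y := by
  obtain ⟨η, hE, hF⟩ := h
  refine mem_Adat_of hA₀ _ (vecMulVec (-η) (f ᵥ* Xminus X)) ?_ ?_
  · rw [vecMulVec_mul', mul_vecMulVec', mulVec_neg, hE, vecMulVec_neg_left, add_neg_cancel]
  · rw [mul_vecMulVec', mulVec_neg, hF, neg_zero, vecMulVec_zero_left]

/-- Rank-one perturbation whose functional annihilates the columns of X₋. -/
lemma mem_Adat_perturb' {A₀ : Matrix (Fin n) (Fin n) ℝ} (hA₀ : A₀ ∈ Adat B C D E F U X Y)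
    (c f : Fin n → ℝ) (h : f ᵥ* Xminus X = 0) :
    A₀ + vecMulVec c f ∈ Adat B C D E F U X Y := by
  refine mem_Adat_of hA₀ _ 0 ?_ (by rw [Matrix.mul_zero])
  rw [vecMulVec_mul', h, vecMulVec_zero_right, Matrix.mul_zero, add_zero]

/-- A nonzero complex kernel vector of the Hautus matrix contradicts full rank. -/
lemma contra_of_eigen {A : Matrix (Fin n) (Fin n) ℝ} {lam : ℂ}
    (hrk : (fromRows (cx A - lam • 1) (cx C)).rank = n)
    {x : Fin n → ℂ} (hx : x ≠ 0) (heig : cx A *ᵥ x = lam • x) (hC : cx C *ᵥ x = 0) :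
    False := by
  apply hx
  apply (rank_eq_width_iff _).mp hrk x
  rw [fromRows_mulVec]
  have h1 : (cx A - lam • 1) *ᵥ x = 0 := by
    rw [sub_mulVec, heig, smul_mulVec, one_mulVec, sub_self]
  rw [h1, hC]
  ext (i | i) <;> rfl

/-- The key single-real-eigenvector construction. -/
lemma key_single
    (hMN : LinearMap.ker (fromCols M N).mulVecLin
      = LinearMap.range (fromRows E F).mulVecLin)
    {A₀ : Matrix (Fin n) (Fin n) ℝ} (hA₀ : A₀ ∈ Adat B C D E F U X Y)
    (w : Fin n → ℝ) (hw : w ≠ 0) (r : ℝ)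
    (hM : M *ᵥ (A₀ *ᵥ w - r • w) = 0) (hC : C *ᵥ w = 0)
    (hrk : ∀ A ∈ Adat B C D E F U X Y,
      (fromRows (cx A - ((r : ℝ) : ℂ) • 1) (cx C)).rank = n) :
    False := by
  obtain ⟨η, hηE, hηF⟩ := exists_EF_preimage hMN _ hM
  have hw' : w ∉ (⊥ : Submodule ℝ (Fin n → ℝ)) := by simpa using hw
  obtain ⟨f, hfw, -⟩ := exists_dual ⊥ w hw'
  set z : Fin n → ℝ := A₀ *ᵥ w - r • w with hz
  have hA₁ : A₀ + vecMulVec (-z) f ∈ Adat B C D E F U X Y := by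
    refine mem_Adat_perturb hA₀ _ _ ⟨-η, ?_, ?_⟩
    · rw [mulVec_neg, hηE]
    · rw [mulVec_neg, hηF, neg_zero]
  set A₁ : Matrix (Fin n) (Fin n) ℝ := A₀ + vecMulVec (-z) f with hA₁def
  have hei : A₁ *ᵥ w = r • w := by
    rw [hA₁def, add_mulVec, vecMulVec_mulVec', hfw, one_smul, hz]
    abel
  refine contra_of_eigen (hrk A₁ hA₁) (x := vcx w) ?_ ?_ ?_
  · rw [Ne, vcx_eq_zero]; exact hw
  · rw [cx_mulVec_vcx, hei, vcx_smul]
  · rw [cx_mulVec_vcx, hC]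
    exact vcx_eq_zero.mpr rfl

/-- The stacked data matrix factors through the Hautus matrix. -/
lemma stacked_eq
    (hMN : LinearMap.ker (fromCols M N).mulVecLin
      = LinearMap.range (fromRows E F).mulVecLin)
    {R : Matrix (Fin k) (Fin T) ℝ}
    (hR : R = M * (Xplus X - B * U) + N * (Y - C * Xminus X - D * U))
    {A : Matrix (Fin n) (Fin n) ℝ} (hA : A ∈ Adat B C D E F U X Y) (lam : ℂ) :
    fromRows (cx R - lam • (cx M * cx (Xminus X))) (cx C * cx (Xminus X))
      = fromRows (cx M * (cx A - lam • 1)) (cx C) * cx (Xminus X) := by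
  rw [fromRows_mul]
  congr 1
  have hRA : R = M * A * Xminus X := R_eq hMN hR hA
  rw [hRA, cx_mul, cx_mul, Matrix.mul_sub, Matrix.sub_mul, Matrix.mul_smul, Matrix.mul_one,
    Matrix.smul_mul, Matrix.mul_assoc]

/-- Main equivalence, uniform in the spectral region `S`. -/
lemma main_equiv
    (hAdat : (Adat B C D E F U X Y).Nonempty)
    (hMN : LinearMap.ker (fromCols M N).mulVecLin
      = LinearMap.range (fromRows E F).mulVecLin)
    {R : Matrix (Fin k) (Fin T) ℝ}
    (hR : R = M * (Xplus X - B * U) + N * (Y - C * Xminus X - D * U))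
    (S : Set ℂ) (hS2 : (2 : ℂ) ∈ S) :
    (∀ A ∈ Adat B C D E F U X Y, ∀ lam ∈ S,
        (fromRows (cx A - lam • 1) (cx C)).rank = n) ↔
      (LinearMap.ker C.mulVecLin ≤ LinearMap.range (Xminus X).mulVecLin ∧
        ∀ lam ∈ S,
          (fromRows (cx R - lam • (cx M * cx (Xminus X))) (cx C * cx (Xminus X))).rank
            = (Xminus X).rank) := by
  obtain ⟨A₀, hA₀⟩ := hAdat
  constructor
  · -- forward direction
    intro H
    constructor
    · -- ker C ⊆ range X₋
      intro x hxker
      by_contra hnot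
      have hCx : C *ᵥ x = 0 := by
        simpa [LinearMap.mem_ker, mulVecLin_apply] using hxker
      obtain ⟨f, hfx, hfK⟩ := exists_dual _ x hnot
      have hfX : f ᵥ* Xminus X = 0 := by
        ext j
        have hcol : (Xminus X) *ᵥ Pi.single j 1 ∈ LinearMap.range (Xminus X).mulVecLin :=
          ⟨Pi.single j 1, rfl⟩
        have := hfK _ hcol
        simp only [vecMul, Pi.zero_apply]
        rw [← this]
        simp [mulVec, dotProduct, Pi.single_apply, Finset.mul_sum, mul_comm]
      have hx0 : x ≠ 0 := by
        intro h0
        rw [h0] at hfx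
        simp at hfx
      set c : Fin n → ℝ := (2 : ℝ) • x - A₀ *ᵥ x with hc
      have hA₁ : A₀ + vecMulVec c f ∈ Adat B C D E F U X Y :=
        mem_Adat_perturb' hA₀ c f hfX
      set A₁ : Matrix (Fin n) (Fin n) ℝ := A₀ + vecMulVec c f with hA₁def
      have hei : A₁ *ᵥ x = (2 : ℝ) • x := by
        rw [hA₁def, add_mulVec, vecMulVec_mulVec', hfx, one_smul, hc]
        abel
      have h2S : ((2 : ℝ) : ℂ) ∈ S := by norm_num; exact hS2
      refine contra_of_eigen (H A₁ hA₁ (((2 : ℝ) : ℂ)) h2S) (x := vcx x) ?_ ?_ ?_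
      · rw [Ne, vcx_eq_zero]; exact hx0
      · rw [cx_mulVec_vcx, hei, vcx_smul]
      · rw [cx_mulVec_vcx, hCx]
        exact vcx_eq_zero.mpr rfl
    · -- rank condition
      intro lam hlam
      rw [stacked_eq hMN hR hA₀ lam, ← cx_rank (Xminus X)]
      rw [rank_mul_eq_iff]
      intro ξ hGx
      set x : Fin n → ℂ := cx (Xminus X) *ᵥ ξ with hxdef
      by_contra hx
      -- components of the kernel equation
      rw [fromRows_mulVec] at hGx
      have hMx : cx M *ᵥ ((cx A₀ - lam • 1) *ᵥ x) = 0 := by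
        have := congrFun hGx
        ext i
        have h := this (Sum.inl i)
        simpa [mulVec_mulVec] using h
      have hCx : cx C *ᵥ x = 0 := by
        have := congrFun hGx
        ext i
        simpa using this (Sum.inr i)
      have hMx' : cx M *ᵥ (cx A₀ *ᵥ x - lam • x) = 0 := by
        have harg : (cx A₀ - lam • 1) *ᵥ x = cx A₀ *ᵥ x - lam • x := by
          rw [sub_mulVec, smul_mulVec, one_mulVec]
        rw [← harg]
        exact hMx
      set u : Fin n → ℝ := vre x with hu
      set v : Fin n → ℝ := vim x with hv
      have hCu : C *ᵥ u = 0 ∧ C *ᵥ v = 0 := by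
        rw [cx_mulVec_decomp] at hCx
        exact pair_eq_zero.mp hCx
      by_cases hind : ∀ s t : ℝ, s • u + t • v = 0 → s = 0 ∧ t = 0
      · -- u, v linearly independent: complex rank-two perturbation
        set z₁ : Fin n → ℝ := A₀ *ᵥ u - (lam.re • u - lam.im • v) with hz₁
        set z₂ : Fin n → ℝ := A₀ *ᵥ v - (lam.im • u + lam.re • v) with hz₂
        have hzdec : cx A₀ *ᵥ x - lam • x = vcx z₁ + Complex.I • vcx z₂ := by
          rw [cx_mulVec_decomp A₀ x, ← hu, ← hv]
          conv_lhs => rw [decomp x]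
          rw [← hu, ← hv, smul_pair, pair_sub, hz₁, hz₂]
        have hM12 : M *ᵥ z₁ = 0 ∧ M *ᵥ z₂ = 0 := by
          rw [hzdec] at hMx'
          rw [cx_mulVec_decomp] at hMx'
          have hre : vre (vcx z₁ + Complex.I • vcx z₂) = z₁ := by ext i; simp [vre, vcx]
          have him : vim (vcx z₁ + Complex.I • vcx z₂) = z₂ := by ext i; simp [vim, vcx]
          rw [hre, him] at hMx'
          exact pair_eq_zero.mp hMx'
        obtain ⟨η₁, hη₁E, hη₁F⟩ := exists_EF_preimage hMN z₁ hM12.1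
        obtain ⟨η₂, hη₂E, hη₂F⟩ := exists_EF_preimage hMN z₂ hM12.2
        -- dual functionals
        have huv : u ∉ Submodule.span ℝ {v} := by
          intro hmem
          obtain ⟨cc, hcc⟩ := Submodule.mem_span_singleton.mp hmem
          have : (1 : ℝ) • u + (-cc) • v = 0 := by
            rw [one_smul, neg_smul, ← hcc]
            abel
          exact one_ne_zero (hind 1 (-cc) this).1
        have hvu : v ∉ Submodule.span ℝ {u} := by
          intro hmem
          obtain ⟨cc, hcc⟩ := Submodule.mem_span_singleton.mp hmem
          have : (-cc) • u + (1 : ℝ) • v = 0 := by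
            rw [one_smul, neg_smul, ← hcc]
            abel
          exact one_ne_zero (hind (-cc) 1 this).2
        obtain ⟨f₁, hf₁u, hf₁K⟩ := exists_dual _ u huv
        obtain ⟨f₂, hf₂v, hf₂K⟩ := exists_dual _ v hvu
        have hf₁v : f₁ ⬝ᵥ v = 0 := hf₁K v (Submodule.mem_span_singleton_self v)
        have hf₂u : f₂ ⬝ᵥ u = 0 := hf₂K u (Submodule.mem_span_singleton_self u)
        -- the perturbed matrix
        have hA₁ : A₀ + vecMulVec (-z₁) f₁ ∈ Adat B C D E F U X Y := by
          refine mem_Adat_perturb hA₀ _ _ ⟨-η₁, ?_, ?_⟩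
          · rw [mulVec_neg, hη₁E]
          · rw [mulVec_neg, hη₁F, neg_zero]
        have hA₂ : A₀ + vecMulVec (-z₁) f₁ + vecMulVec (-z₂) f₂ ∈ Adat B C D E F U X Y := by
          refine mem_Adat_perturb hA₁ _ _ ⟨-η₂, ?_, ?_⟩
          · rw [mulVec_neg, hη₂E]
          · rw [mulVec_neg, hη₂F, neg_zero]
        set A₂ : Matrix (Fin n) (Fin n) ℝ :=
          A₀ + vecMulVec (-z₁) f₁ + vecMulVec (-z₂) f₂ with hA₂def
        have heiu : A₂ *ᵥ u = lam.re • u - lam.im • v := by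
          rw [hA₂def, add_mulVec, add_mulVec, vecMulVec_mulVec', vecMulVec_mulVec',
            hf₁u, hf₂u, one_smul, zero_smul, hz₁]
          abel
        have heiv : A₂ *ᵥ v = lam.im • u + lam.re • v := by
          rw [hA₂def, add_mulVec, add_mulVec, vecMulVec_mulVec', vecMulVec_mulVec',
            hf₁v, hf₂v, one_smul, zero_smul, hz₂]
          abel
        have heig : cx A₂ *ᵥ x = lam • x := by
          rw [cx_mulVec_decomp A₂ x, ← hu, ← hv, heiu, heiv]
          conv_rhs => rw [decomp x]
          rw [← hu, ← hv, smul_pair]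
        exact contra_of_eigen (H A₂ hA₂ lam hlam) hx heig hCx
      · -- u, v linearly dependent: real eigenvector
        push_neg at hind
        obtain ⟨s, t, hst, hne⟩ := hind
        -- extract w, γ with x = γ • vcx w
        have hwγ : ∃ (w : Fin n → ℝ) (γ : ℂ), w ≠ 0 ∧ γ ≠ 0 ∧ x = γ • vcx w := by
          by_cases ht : t = 0
          · have hs : s ≠ 0 := fun h => hne h ht
            have hu0 : u = 0 := by
              rw [ht, zero_smul, add_zero] at hst
              rcases smul_eq_zero.mp hst with h | h
              · exact absurd h hs
              · exact h
            have hv0 : v ≠ 0 := by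
              intro h
              apply hx
              rw [decomp x, ← hu, ← hv, hu0, h]
              exact pair_eq_zero.mpr ⟨rfl, rfl⟩
            refine ⟨v, Complex.I, hv0, Complex.I_ne_zero, ?_⟩
            rw [decomp x, ← hu, ← hv, hu0]
            have : vcx (0 : Fin n → ℝ) = 0 := vcx_eq_zero.mpr rfl
            rw [this, zero_add]
          · -- v = c • u
            set cc : ℝ := -(s / t) with hcc
            have hvu : v = cc • u := by
              ext i
              have := congrFun hst i
              simp only [Pi.add_apply, Pi.smul_apply, smul_eq_mul, Pi.zero_apply] at this
              simp only [Pi.smul_apply, smul_eq_mul, hcc]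
              field_simp
              linarith
            have hu0 : u ≠ 0 := by
              intro h
              apply hx
              rw [decomp x, ← hu, ← hv, hvu, h, smul_zero]
              exact pair_eq_zero.mpr ⟨rfl, rfl⟩
            refine ⟨u, 1 + (cc : ℂ) * Complex.I, hu0, ?_, ?_⟩
            · intro h
              have := congrArg Complex.re h
              simp at this
            · rw [decomp x, ← hu, ← hv, hvu]
              ext i
              simp [vcx, Complex.ext_iff]
        obtain ⟨w, γ, hw0, hγ0, hxw⟩ := hwγ
        -- C annihilates w
        have hCw : C *ᵥ w = 0 := by
          rw [hxw, mulVec_smul, cx_mulVec_vcx] at hCx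
          rcases smul_eq_zero.mp hCx with h | h
          · exact absurd h hγ0
          · exact vcx_eq_zero.mp h
        -- spectral equation for w
        have hMeq : vcx (M *ᵥ (A₀ *ᵥ w)) = lam • vcx (M *ᵥ w) := by
          have h1 : cx A₀ *ᵥ x - lam • x = γ • (vcx (A₀ *ᵥ w) - lam • vcx w) := by
            rw [hxw, mulVec_smul, cx_mulVec_vcx, smul_comm lam γ, smul_sub]
          rw [h1, mulVec_smul] at hMx'
          rcases smul_eq_zero.mp hMx' with h | h
          · exact absurd h hγ0
          · rw [mulVec_sub, cx_mulVec_vcx, mulVec_smul, cx_mulVec_vcx, sub_eq_zero] at h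
            exact h
        have hMeqi : ∀ i, ((M *ᵥ (A₀ *ᵥ w)) i : ℂ) = lam * ((M *ᵥ w) i : ℂ) := by
          intro i
          have := congrFun hMeq i
          simpa [vcx] using this
        by_cases him : lam.im = 0
        · -- λ is real
          have hlamre : ((lam.re : ℝ) : ℂ) = lam := by
            apply Complex.ext <;> simp [him]
          have hMz : M *ᵥ (A₀ *ᵥ w - lam.re • w) = 0 := by
            rw [mulVec_sub, mulVec_smul]
            ext i
            have h := hMeqi i
            rw [← hlamre] at h
            have hre : (M *ᵥ (A₀ *ᵥ w)) i = lam.re * (M *ᵥ w) i := by exact_mod_cast h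
            simp only [Pi.sub_apply, Pi.smul_apply, smul_eq_mul, Pi.zero_apply]
            rw [hre]
            ring
          refine key_single hMN hA₀ w hw0 lam.re hMz hCw ?_
          intro A hA
          rw [hlamre]
          exact H A hA lam hlam
        · -- λ not real forces M w = 0
          have hMw : M *ᵥ w = 0 := by
            ext i
            simp only [Pi.zero_apply]
            have := congrArg Complex.im (hMeqi i)
            simp at this
            rcases this with h | h
            · exact absurd h him
            · exact h
          have hMAw : M *ᵥ (A₀ *ᵥ w) = 0 := by
            ext i
            simp only [Pi.zero_apply]
            have h := congrArg Complex.re (hMeqi i)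
            have hwi : (M *ᵥ w) i = 0 := congrFun hMw i
            simp only [Complex.ofReal_re, Complex.mul_re, Complex.ofReal_im, mul_zero,
              sub_zero] at h
            rw [hwi, mul_zero] at h
            exact h
          have hMz : M *ᵥ (A₀ *ᵥ w - (2 : ℝ) • w) = 0 := by
            rw [mulVec_sub, mulVec_smul, hMAw, hMw, smul_zero, sub_zero]
          refine key_single hMN hA₀ w hw0 2 hMz hCw ?_
          intro A hA
          have h2 : (((2 : ℝ) : ℝ) : ℂ) = (2 : ℂ) := by norm_num
          rw [h2]
          exact H A hA 2 hS2
  · -- backward direction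
    rintro ⟨hker, hrk⟩ A hA lam hlam
    rw [rank_eq_width_iff]
    intro x hx0
    rw [fromRows_mulVec] at hx0
    have h1 : (cx A - lam • 1) *ᵥ x = 0 := by
      ext i; simpa using congrFun hx0 (Sum.inl i)
    have h2 : cx C *ᵥ x = 0 := by
      ext i; simpa using congrFun hx0 (Sum.inr i)
    -- x lies in the complexified column space of X₋
    have hCu : C *ᵥ vre x = 0 ∧ C *ᵥ vim x = 0 := by
      rw [cx_mulVec_decomp] at h2
      exact pair_eq_zero.mp h2
    obtain ⟨ξ₁, hξ₁⟩ := hker (by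
      simp only [LinearMap.mem_ker, mulVecLin_apply]; exact hCu.1 :
      vre x ∈ LinearMap.ker C.mulVecLin)
    obtain ⟨ξ₂, hξ₂⟩ := hker (by
      simp only [LinearMap.mem_ker, mulVecLin_apply]; exact hCu.2 :
      vim x ∈ LinearMap.ker C.mulVecLin)
    simp only [mulVecLin_apply] at hξ₁ hξ₂
    set ξ : Fin T → ℂ := vcx ξ₁ + Complex.I • vcx ξ₂ with hξ
    have hXξ : cx (Xminus X) *ᵥ ξ = x := by
      rw [hξ, mulVec_add, mulVec_smul, cx_mulVec_vcx, cx_mulVec_vcx, hξ₁, hξ₂]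
      exact (decomp x).symm
    -- use the rank hypothesis
    have hrkA := hrk lam hlam
    rw [stacked_eq hMN hR hA lam, ← cx_rank (Xminus X)] at hrkA
    have := (rank_mul_eq_iff _ _).mp hrkA ξ ?_
    · rw [hXξ] at this
      exact this
    · rw [hXξ, fromRows_mulVec]
      have hM0 : (cx M * (cx A - lam • 1)) *ᵥ x = 0 := by
        rw [← mulVec_mulVec, h1, mulVec_zero]
      rw [hM0, h2]
      ext (i | i) <;> rfl

end InfObs

open InfObs in
/-- informativity of the data for observability / detectability of (C,A). -/
theorem informative_observability_detectability (n m p q T k : ℕ)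
    (hn : 1 ≤ n) (hm : 1 ≤ m) (hp : 1 ≤ p) (hq : 1 ≤ q) (hT : 1 ≤ T)
    (B : Matrix (Fin n) (Fin m) ℝ) (C : Matrix (Fin p) (Fin n) ℝ)
    (D : Matrix (Fin p) (Fin m) ℝ) (E : Matrix (Fin n) (Fin q) ℝ)
    (F : Matrix (Fin p) (Fin q) ℝ)
    (U : Matrix (Fin m) (Fin T) ℝ) (X : Matrix (Fin n) (Fin (T + 1)) ℝ)
    (Y : Matrix (Fin p) (Fin T) ℝ)
    (M : Matrix (Fin k) (Fin n) ℝ) (N : Matrix (Fin k) (Fin p) ℝ)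
    (hAdat : (Adat B C D E F U X Y).Nonempty)
    (hMN : LinearMap.ker (fromCols M N).mulVecLin
      = LinearMap.range (fromRows E F).mulVecLin)
    (R : Matrix (Fin k) (Fin T) ℝ)
    (hR : R = M * (Xplus X - B * U) + N * (Y - C * Xminus X - D * U)) :
    ((∀ A ∈ Adat B C D E F U X Y, ∀ lam : ℂ,
        (fromRows (cx A - lam • 1) (cx C)).rank = n) ↔
      (LinearMap.ker C.mulVecLin ≤ LinearMap.range (Xminus X).mulVecLin ∧
        ∀ lam : ℂ,
          (fromRows (cx R - lam • (cx M * cx (Xminus X))) (cx C * cx (Xminus X))).rank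
            = (Xminus X).rank))
    ∧
    ((∀ A ∈ Adat B C D E F U X Y, ∀ lam : ℂ, 1 ≤ ‖lam‖ →
        (fromRows (cx A - lam • 1) (cx C)).rank = n) ↔
      (LinearMap.ker C.mulVecLin ≤ LinearMap.range (Xminus X).mulVecLin ∧
        ∀ lam : ℂ, 1 ≤ ‖lam‖ →
          (fromRows (cx R - lam • (cx M * cx (Xminus X))) (cx C * cx (Xminus X))).rank
            = (Xminus X).rank)) := by
  constructor
  · have h := main_equiv hAdat hMN hR Set.univ (Set.mem_univ _)
    constructor
    · intro H
      have := h.mp (fun A hA lam _ => H A hA lam)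
      exact ⟨this.1, fun lam => this.2 lam (Set.mem_univ _)⟩
    · intro H
      have := h.mpr ⟨H.1, fun lam _ => H.2 lam⟩
      exact fun A hA lam => this A hA lam (Set.mem_univ _)
  · have h2mem : (2 : ℂ) ∈ {lam : ℂ | 1 ≤ ‖lam‖} := by
      simp only [Set.mem_setOf_eq]
      norm_num
    have h := main_equiv hAdat hMN hR {lam : ℂ | 1 ≤ ‖lam‖} h2mem
    constructor
    · intro H
      have := h.mp (fun A hA lam hlam => H A hA lam hlam)
      exact ⟨this.1, fun lam hlam => this.2 lam hlam⟩
    · intro H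
      have := h.mpr ⟨H.1, fun lam hlam => H.2 lam hlam⟩
      exact fun A hA lam hlam => this A hA lam hlam
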